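/- Mellin transform of the NIG Bessel kernel: for all a > 0, b > 0 and s ∈ ℂ with Re(s) > 0, ∫₀^∞ x^{s−1} · K₁(a√(x² + b²)) / √(x² + b²) dx = 2^{s/2 − 1} a^{−s/2} b^{s/2 − 1} Γ(s/2) K_{1 − s/2}(ab). -/

import Mathlib

open MeasureTheory

open Set Real


-- workhorse integrability
lemma L0 {p c : ℝ} (hp : -1 < p) (hc : 0 < c) :
    IntegrableOn (fun x : ℝ => x ^ p * Real.exp (-(c * x))) (Ioi 0) := by
  have h := (Real.GammaIntegral_convergent (by linarith : 0 < p + 1))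
  have h2 : IntegrableOn (fun x : ℝ => Real.exp (-(c*x)) * (c*x) ^ (p + 1 - 1)) (Ioi 0) := by
    have := (integrableOn_Ioi_comp_mul_left_iff
      (fun x : ℝ => Real.exp (-x) * x ^ (p + 1 - 1)) 0 hc).mpr (by simpa using h)
    simpa using this
  have h3 := h2.const_mul (c ^ p)⁻¹
  apply (integrableOn_congr_fun ?_ measurableSet_Ioi).mpr h3
  intro x hx
  simp only [add_sub_cancel_right]
  rw [Real.mul_rpow hc.le (le_of_lt hx)]
  field_simp [Real.rpow_natCast]

-- pow/factorial vs exp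
lemma pow_div_fact_le_exp (x : ℝ) (hx : 0 ≤ x) (n : ℕ) : x ^ n / n.factorial ≤ Real.exp x := by
  calc x ^ n / n.factorial ≤ ∑ i ∈ Finset.range (n+1), x ^ i / i.factorial := by
        refine Finset.single_le_sum (f := fun i => x ^ i / (i.factorial : ℝ)) ?_ (Finset.self_mem_range_succ n)
        intro i _
        positivity
    _ ≤ Real.exp x := Real.sum_le_exp_of_nonneg hx _

-- L3
lemma L3 (r : ℝ) {d : ℝ} (hd : 0 < d) :
    IntegrableOn (fun t : ℝ => t ^ r * Real.exp (-t - d / t)) (Ioi 0) := by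
  obtain ⟨n, hn⟩ : ∃ n : ℕ, -1 < r + n := ⟨⌈|r|⌉₊ + 1, by
    have : |r| ≤ ⌈|r|⌉₊ := Nat.le_ceil _
    have h2 : -r ≤ |r| := neg_le_abs r
    push_cast
    linarith⟩
  have hint := (L0 hn one_pos).const_mul ((n.factorial : ℝ) / d ^ n)
  refine Integrable.mono' hint ?_ ?_
  · refine (ContinuousOn.mul ?_ ?_).aestronglyMeasurable measurableSet_Ioi
    · exact fun x hx => (Real.continuousAt_rpow_const x r (Or.inl (ne_of_gt hx))).continuousWithinAt
    · exact (((continuousOn_id.neg).sub (continuousOn_const.div continuousOn_id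
        (fun x hx => ne_of_gt hx))).rexp)
  · rw [ae_restrict_iff' measurableSet_Ioi]
    filter_upwards with t ht
    have ht' : (0:ℝ) < t := ht
    have hb : Real.exp (-(d/t)) ≤ (n.factorial : ℝ) / d ^ n * t ^ n := by
      have h1 : (d/t) ^ n / n.factorial ≤ Real.exp (d/t) :=
        pow_div_fact_le_exp _ (by positivity) n
      rw [Real.exp_neg]
      rw [inv_le_comm₀ (Real.exp_pos _) (by positivity)]
      calc ((n.factorial : ℝ) / d ^ n * t ^ n)⁻¹ = (d/t)^n / n.factorial := by
            field_simp
            rw [← mul_pow, mul_div_cancel₀ d ht'.ne']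
        _ ≤ Real.exp (d/t) := h1
    have hnorm : ‖t ^ r * Real.exp (-t - d / t)‖ = t ^ r * Real.exp (-t - d/t) := by
      rw [Real.norm_eq_abs, abs_of_nonneg (by positivity)]
    rw [hnorm]
    calc t ^ r * Real.exp (-t - d/t) = (t ^ r * Real.exp (-(d/t))) * Real.exp (-t) := by
          rw [show -t - d/t = -(d/t) + -t by ring, Real.exp_add]
          ring
      _ ≤ (t ^ r * ((n.factorial : ℝ) / d ^ n * t ^ n)) * Real.exp (-t) := by
          have := Real.exp_pos (-t)
          gcongr
      _ = (n.factorial : ℝ) / d ^ n * (t ^ (r + n) * Real.exp (-(1 * t))) := by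
          rw [Real.rpow_add ht', Real.rpow_natCast, one_mul]; ring

lemma cpow_pos_eq (p : ℝ) (hp : 0 < p) (w : ℂ) :
    (p : ℂ) ^ w = Complex.exp (w * (Real.log p : ℂ)) := by
  rw [Complex.cpow_def_of_ne_zero (by exact_mod_cast hp.ne'), Complex.ofReal_log hp.le, mul_comm]

lemma gaussReal {c σ : ℝ} (hc : 0 < c) (hσ : 0 < σ) :
    ∫ x in Ioi (0:ℝ), x ^ (σ - 1) * Real.exp (-(c * x ^ 2))
      = (1/c) ^ (σ/2) * Real.Gamma (σ/2) / 2 := by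
  have key := integral_comp_rpow_Ioi_of_pos
    (g := fun u : ℝ => u ^ (σ/2 - 1) * Real.exp (-(c*u))) (two_pos)
  rw [Real.integral_rpow_mul_exp_neg_mul_Ioi (by positivity) hc] at key
  have h2 : (∫ x in Ioi (0:ℝ), (2 * x ^ ((2:ℝ) - 1)) •
        ((x ^ (2:ℝ)) ^ (σ/2 - 1) * Real.exp (-(c * x ^ (2:ℝ)))))
      = ∫ x in Ioi (0:ℝ), 2 * (x ^ (σ - 1) * Real.exp (-(c * x ^ 2))) := by
    refine setIntegral_congr_fun measurableSet_Ioi (fun x hx => ?_)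
    have hx' : (0:ℝ) < x := hx
    have hx2 : x ^ (2:ℝ) = x ^ 2 := by
      rw [show (2:ℝ) = ((2:ℕ):ℝ) by norm_num, Real.rpow_natCast]
    rw [smul_eq_mul, hx2, show x ^ 2 = x ^ ((2:ℕ):ℝ) by rw [Real.rpow_natCast],
      ← Real.rpow_mul hx'.le]
    norm_num
    rw [show σ - 1 = 1 + 2 * (σ/2 - 1) by ring, Real.rpow_add hx', Real.rpow_one]
    ring
  rw [h2, MeasureTheory.integral_const_mul _ _] at key
  linarith

lemma gaussC {c : ℝ} (hc : 0 < c) {s : ℂ} (hs : 0 < s.re) :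
    ∫ x in Ioi (0:ℝ), (x:ℂ) ^ (s - 1) * (Real.exp (-(c * x ^ 2)) : ℂ)
      = (1/(c:ℂ)) ^ (s/2) * Complex.Gamma (s/2) / 2 := by
  have hs2 : 0 < (s/2).re := by
    rw [show (2:ℂ) = ((2:ℝ):ℂ) by norm_num, Complex.div_ofReal_re]
    linarith
  have key := integral_comp_rpow_Ioi_of_pos
    (g := fun u : ℝ => (u:ℂ) ^ (s/2 - 1) * Complex.exp (-((c:ℂ) * (u:ℂ)))) (two_pos)
  have hval : (∫ u in Ioi (0:ℝ), (u:ℂ) ^ (s/2 - 1) * Complex.exp (-((c:ℂ) * (u:ℂ))))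
      = (1/(c:ℂ)) ^ (s/2) * Complex.Gamma (s/2) := by
    have := Complex.integral_cpow_mul_exp_neg_mul_Ioi hs2 hc
    rw [← this]
  rw [hval] at key
  have h2 : (∫ x in Ioi (0:ℝ), (2 * x ^ ((2:ℝ) - 1)) •
        (((x ^ (2:ℝ) : ℝ) : ℂ) ^ (s/2 - 1) * Complex.exp (-((c:ℂ) * ((x ^ (2:ℝ) : ℝ) : ℂ)))))
      = ∫ x in Ioi (0:ℝ), (2:ℂ) * ((x:ℂ) ^ (s - 1) * (Real.exp (-(c * x ^ 2)) : ℂ)) := by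
    refine setIntegral_congr_fun measurableSet_Ioi (fun x hx => ?_)
    have hx' : (0:ℝ) < x := hx
    have hx2 : x ^ (2:ℝ) = x ^ 2 := by
      rw [show (2:ℝ) = ((2:ℕ):ℝ) by norm_num, Real.rpow_natCast]
    have e2 : ((x ^ 2 : ℝ) : ℂ) ^ (s/2 - 1) * (x:ℂ) = (x:ℂ) ^ (s - 1) := by
      rw [cpow_pos_eq _ (by positivity : (0:ℝ) < x ^ 2) _, cpow_pos_eq _ hx' _,
        show ((x:ℝ):ℂ) = Complex.exp ((Real.log x : ℂ)) by
          rw [← Complex.ofReal_exp, Real.exp_log hx'],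
        ← Complex.exp_add]
      congr 1
      rw [Real.log_pow]
      push_cast
      ring
    rw [hx2, Complex.real_smul, Complex.ofReal_exp]
    push_cast
    rw [← e2]
    push_cast
    norm_num [Real.rpow_one]
    ring
  rw [h2, MeasureTheory.integral_const_mul _ _] at key
  linear_combination key / 2


lemma gaussC_int {c : ℝ} (hc : 0 < c) {s : ℂ} (hs : 0 < s.re) :
    IntegrableOn (fun x : ℝ => (x:ℂ) ^ (s - 1) * (Real.exp (-(c * x ^ 2)) : ℂ)) (Ioi 0) := by
  have hbound := ((L0 (p := s.re - 1) (by linarith) hc).const_mul (Real.exp c)).norm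
  refine Integrable.mono' hbound ?_ ?_
  · refine ContinuousOn.aestronglyMeasurable ?_ measurableSet_Ioi
    refine ContinuousOn.mul ?_ ?_
    · intro x hx
      exact (Complex.continuousAt_ofReal_cpow_const x (s-1) (Or.inr (ne_of_gt hx))).continuousWithinAt
    · exact Complex.continuous_ofReal.comp_continuousOn
        (((continuousOn_const.mul (continuousOn_pow 2)).neg).rexp)
  · rw [ae_restrict_iff' measurableSet_Ioi]
    filter_upwards with x hx
    have hx' : (0:ℝ) < x := hx
    rw [norm_mul, Complex.norm_cpow_eq_rpow_re_of_pos hx']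
    have h1 : ‖((Real.exp (-(c * x ^ 2)) : ℝ) : ℂ)‖ = Real.exp (-(c * x ^ 2)) := by
      rw [Complex.norm_real, Real.norm_eq_abs, abs_of_pos (Real.exp_pos _)]
    rw [h1]
    have h2 : (s - 1).re = s.re - 1 := by simp
    rw [h2]
    have h3 : ‖Real.exp c * (x ^ (s.re - 1) * Real.exp (-(c * x)))‖
        = Real.exp c * (x ^ (s.re - 1) * Real.exp (-(c * x))) := by
      rw [Real.norm_eq_abs, abs_of_nonneg (by positivity)]
    rw [h3]
    have h4 : Real.exp (-(c * x ^ 2)) ≤ Real.exp c * Real.exp (-(c * x)) := by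
      rw [← Real.exp_add, Real.exp_le_exp]
      nlinarith [sq_nonneg (x - 1)]
    calc x ^ (s.re - 1) * Real.exp (-(c * x ^ 2))
        ≤ x ^ (s.re - 1) * (Real.exp c * Real.exp (-(c * x))) := by
          have : (0:ℝ) ≤ x ^ (s.re - 1) := by positivity
          exact mul_le_mul_of_nonneg_left h4 this
      _ = Real.exp c * (x ^ (s.re - 1) * Real.exp (-(c * x))) := by ring

/-- Modified Bessel function of the second kind, complex index `ν`, real argument `z`. -/
noncomputable def besselK (ν : ℂ) (z : ℝ) : ℂ :=
  (1 / 2) * ((z : ℂ) / 2) ^ ν *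
    ∫ t in Set.Ioi (0 : ℝ), Complex.exp (-(t : ℂ) - (z : ℂ) ^ 2 / (4 * (t : ℂ))) *
      (t : ℂ) ^ (-ν - 1)

/-- Mellin transform of the NIG Bessel kernel. -/
theorem mellin_transform_nig_bessel_kernel
    (a b : ℝ) (ha : 0 < a) (hb : 0 < b) (s : ℂ) (hs : 0 < s.re) :
    (∫ x in Set.Ioi (0 : ℝ),
        (x : ℂ) ^ (s - 1) * besselK 1 (a * Real.sqrt (x ^ 2 + b ^ 2)) /
          (Real.sqrt (x ^ 2 + b ^ 2) : ℂ))
      = 2 ^ (s / 2 - 1) * (a : ℂ) ^ (-(s / 2)) * (b : ℂ) ^ (s / 2 - 1) *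
          Complex.Gamma (s / 2) * besselK (1 - s / 2) (a * b) := by
  set F : ℝ → ℝ → ℂ := fun x t => (x:ℂ) ^ (s - 1) *
    ((Real.exp (-t - a^2*(x^2+b^2)/(4*t)) * t ^ (-2:ℝ) : ℝ) : ℂ) with hF
  have step1 : (∫ x in Set.Ioi (0 : ℝ),
        (x : ℂ) ^ (s - 1) * besselK 1 (a * Real.sqrt (x ^ 2 + b ^ 2)) /
          (Real.sqrt (x ^ 2 + b ^ 2) : ℂ))
      = ∫ x in Ioi (0:ℝ), ((a:ℂ)/4) * ∫ t in Ioi (0:ℝ), F x t := by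
    refine setIntegral_congr_fun measurableSet_Ioi (fun x hx => ?_)
    have hx' : (0:ℝ) < x := hx
    have hq : (0:ℝ) < Real.sqrt (x^2+b^2) := Real.sqrt_pos.mpr (by positivity)
    have hzsq : (a * Real.sqrt (x^2+b^2))^2 = a^2*(x^2+b^2) := by
      rw [mul_pow, Real.sq_sqrt (by positivity)]
    have hI : (∫ t in Ioi (0:ℝ), Complex.exp (-(t:ℂ) - ((a * Real.sqrt (x^2+b^2) : ℝ):ℂ)^2 / (4*(t:ℂ))) *
          (t:ℂ) ^ (-(1:ℂ) - 1))
        = ∫ t in Ioi (0:ℝ), ((Real.exp (-t - a^2*(x^2+b^2)/(4*t)) * t ^ (-2:ℝ) : ℝ) : ℂ) := by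
      refine setIntegral_congr_fun measurableSet_Ioi (fun t ht => ?_)
      have ht' : (0:ℝ) < t := ht
      have e1 : -(t:ℂ) - ((a * Real.sqrt (x^2+b^2) : ℝ):ℂ)^2 / (4*(t:ℂ))
          = ((-t - a^2*(x^2+b^2)/(4*t) : ℝ) : ℂ) := by
        push_cast
        rw [show ((a:ℂ) * (Real.sqrt (x^2+b^2) : ℂ))^2 = (((a * Real.sqrt (x^2+b^2))^2 : ℝ) : ℂ) by push_cast; ring,
          hzsq]
        push_cast
        ring
      have e2 : (t:ℂ) ^ (-(1:ℂ) - 1) = ((t ^ (-2:ℝ) : ℝ) : ℂ) := by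
        rw [Complex.ofReal_cpow ht'.le]
        norm_num
      rw [e1, e2, Complex.ofReal_mul, Complex.ofReal_exp]
    show (x : ℂ) ^ (s - 1) * besselK 1 (a * Real.sqrt (x ^ 2 + b ^ 2)) /
          (Real.sqrt (x ^ 2 + b ^ 2) : ℂ) = _
    rw [besselK, Complex.cpow_one, hI, hF]
    simp only []
    rw [show (∫ t in Ioi (0:ℝ), (x:ℂ) ^ (s-1) * ((Real.exp (-t - a^2*(x^2+b^2)/(4*t)) * t ^ (-2:ℝ) : ℝ) : ℂ))
        = (x:ℂ)^(s-1) * ∫ t in Ioi (0:ℝ), ((Real.exp (-t - a^2*(x^2+b^2)/(4*t)) * t ^ (-2:ℝ) : ℝ) : ℂ)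
      from MeasureTheory.integral_const_mul _ _]
    have hqc : ((Real.sqrt (x^2+b^2) : ℝ) : ℂ) ≠ 0 := by exact_mod_cast hq.ne'
    push_cast
    field_simp
    ring

  rw [step1, MeasureTheory.integral_const_mul]
  have hsplit : ∀ t ∈ Ioi (0:ℝ), ∀ x : ℝ, F x t =
      (Real.exp (-t - a^2*b^2/(4*t)) * t ^ (-2:ℝ)) •
        ((x:ℂ) ^ (s-1) * ((Real.exp (-(a^2/(4*t) * x^2)) : ℝ) : ℂ)) := by
    intro t ht x
    have ht' : (0:ℝ) < t := ht
    rw [hF]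
    simp only []
    rw [show -t - a^2*(x^2+b^2)/(4*t) = (-t - a^2*b^2/(4*t)) + (-(a^2/(4*t) * x^2)) by
      field_simp; ring, Real.exp_add, Complex.real_smul]
    push_cast
    ring
  have hmeas : AEStronglyMeasurable (fun p : ℝ × ℝ => F p.1 p.2)
      ((volume.restrict (Ioi (0:ℝ))).prod (volume.restrict (Ioi (0:ℝ)))) := by
    rw [Measure.prod_restrict]
    refine ContinuousOn.aestronglyMeasurable ?_ (measurableSet_Ioi.prod measurableSet_Ioi)
    refine ContinuousOn.mul ?_ ?_
    · intro p hp
      exact ((Complex.continuousAt_ofReal_cpow_const p.1 (s-1)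
        (Or.inr (ne_of_gt hp.1))).comp continuous_fst.continuousAt).continuousWithinAt
    · refine Complex.continuous_ofReal.comp_continuousOn (ContinuousOn.mul ?_ ?_)
      · refine Real.continuous_exp.comp_continuousOn ?_
        refine ContinuousOn.sub continuous_snd.neg.continuousOn ?_
        refine ContinuousOn.div ?_ ?_ ?_
        · exact (continuous_const.mul ((continuous_fst.pow 2).add continuous_const)).continuousOn
        · exact (continuous_const.mul continuous_snd).continuousOn
        · intro p hp
          have h2 : (0:ℝ) < p.2 := hp.2
          positivity
      · intro p hp
        exact ((Real.continuousAt_rpow_const p.2 (-2)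
          (Or.inl (ne_of_gt hp.2))).comp continuous_snd.continuousAt).continuousWithinAt
  have hsect : ∀ t ∈ Ioi (0:ℝ), Integrable (fun x => F x t) (volume.restrict (Ioi (0:ℝ))) := by
    intro t ht
    have ht' : (0:ℝ) < t := ht
    have hct : (0:ℝ) < a^2/(4*t) := by positivity
    have h := (gaussC_int hct hs).smul (Real.exp (-t - a^2*b^2/(4*t)) * t ^ (-2:ℝ))
    exact h.congr (Filter.Eventually.of_forall fun x => (hsplit t ht x).symm)
  have hnormval : ∀ t ∈ Ioi (0:ℝ), (∫ x in Ioi (0:ℝ), ‖F x t‖)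
      = ((4/a^2) ^ (s.re/2) * Real.Gamma (s.re/2)/2) *
        (t ^ (s.re/2 - 2) * Real.exp (-t - (a^2*b^2/4)/t)) := by
    intro t ht
    have ht' : (0:ℝ) < t := ht
    have hct : (0:ℝ) < a^2/(4*t) := by positivity
    have hpt : ∀ x ∈ Ioi (0:ℝ), ‖F x t‖ =
        (Real.exp (-t - a^2*b^2/(4*t)) * t ^ (-2:ℝ)) *
          (x ^ (s.re-1) * Real.exp (-(a^2/(4*t) * x^2))) := by
      intro x hx
      have hx' : (0:ℝ) < x := hx
      rw [hsplit t ht x, norm_smul, Real.norm_eq_abs, abs_of_nonneg (by positivity),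
        norm_mul, Complex.norm_cpow_eq_rpow_re_of_pos hx',
        Complex.norm_real, Real.norm_eq_abs, abs_of_pos (Real.exp_pos _)]
      norm_num
    rw [setIntegral_congr_fun measurableSet_Ioi hpt, MeasureTheory.integral_const_mul,
      gaussReal hct hs]
    rw [show (1/(a^2/(4*t)) : ℝ) = (4/a^2) * t by field_simp,
      Real.mul_rpow (by positivity) ht'.le,
      show (-(t:ℝ) - (a^2*b^2/4)/t) = -t - a^2*b^2/(4*t) by rw [div_div],
      show t ^ (s.re/2 - 2) = t ^ (s.re/2) * t ^ (-2:ℝ) by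
        rw [show s.re/2 - 2 = s.re/2 + (-2) by ring, Real.rpow_add ht']]
    ring
  have hii : Integrable (fun t => ∫ x in Ioi (0:ℝ), ‖F x t‖) (volume.restrict (Ioi (0:ℝ))) := by
    have h := (L3 (s.re/2 - 2) (d := a^2*b^2/4) (by positivity)).const_mul
      ((4/a^2) ^ (s.re/2) * Real.Gamma (s.re/2)/2)
    refine h.congr ?_
    rw [Filter.EventuallyEq, ae_restrict_iff' measurableSet_Ioi]
    filter_upwards with t ht
    rw [hnormval t ht]
  have hint : Integrable (Function.uncurry F)
      ((volume.restrict (Ioi (0:ℝ))).prod (volume.restrict (Ioi (0:ℝ)))) := by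
    refine (integrable_prod_iff' hmeas).mpr ⟨?_, ?_⟩
    · rw [ae_restrict_iff' measurableSet_Ioi]
      exact Filter.Eventually.of_forall hsect
    · refine hii.congr ?_
      rw [Filter.EventuallyEq, ae_restrict_iff' measurableSet_Ioi]
      filter_upwards with t ht
      rfl
  rw [MeasureTheory.integral_integral_swap hint]
  have step3 : ∀ t ∈ Ioi (0:ℝ), (∫ x in Ioi (0:ℝ), F x t)
      = ((((4/a^2 : ℝ)):ℂ) ^ (s/2) * Complex.Gamma (s/2)/2) *
        (((Real.exp (-t - a^2*b^2/(4*t)) : ℝ):ℂ) * (t:ℂ) ^ (s/2 - 2)) := by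
    intro t ht
    have ht' : (0:ℝ) < t := ht
    have htC : ((t:ℝ):ℂ) ≠ 0 := by exact_mod_cast ht'.ne'
    have hct : (0:ℝ) < a^2/(4*t) := by positivity
    rw [setIntegral_congr_fun measurableSet_Ioi (fun x _ => hsplit t ht x),
      integral_smul, gaussC hct hs, Complex.real_smul]
    have hc1 : (1/((a^2/(4*t) : ℝ) : ℂ)) = ((4/a^2 : ℝ) : ℂ) * ((t:ℝ):ℂ) := by
      push_cast
      field_simp
    have hpow : ((t:ℂ)) ^ (((-2:ℝ)):ℂ) * ((t:ℂ)) ^ (s/2) = (t:ℂ) ^ (s/2 - 2) := by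
      rw [← Complex.cpow_add _ _ htC]
      congr 1
      push_cast
      ring
    rw [hc1, Complex.mul_cpow_ofReal_nonneg (by positivity) ht'.le, Complex.ofReal_mul,
      Complex.ofReal_cpow ht'.le, ← hpow]
    push_cast
    ring
  rw [setIntegral_congr_fun measurableSet_Ioi step3, MeasureTheory.integral_const_mul]
  simp only [besselK]
  have hJ : (∫ t in Ioi (0:ℝ), Complex.exp (-(t:ℂ) - ((a*b : ℝ):ℂ)^2/(4*(t:ℂ))) *
        (t:ℂ) ^ (-(1-s/2)-1))
      = ∫ t in Ioi (0:ℝ), ((Real.exp (-t - a^2*b^2/(4*t)) : ℝ):ℂ) * (t:ℂ) ^ (s/2 - 2) := by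
    refine setIntegral_congr_fun measurableSet_Ioi (fun t ht => ?_)
    have ht' : (0:ℝ) < t := ht
    rw [show -(1-s/2)-1 = s/2-2 by ring,
      show -(t:ℂ) - ((a*b : ℝ):ℂ)^2/(4*(t:ℂ)) = ((-t - a^2*b^2/(4*t) : ℝ):ℂ) by
        push_cast; ring,
      Complex.ofReal_exp]
  rw [hJ]
  have haC : (a:ℂ) ≠ 0 := by exact_mod_cast ha.ne'
  suffices hconst : ((a:ℂ)/4) * ((((4/a^2 : ℝ)):ℂ) ^ (s/2) * Complex.Gamma (s/2)/2)
      = 2 ^ (s/2-1) * (a:ℂ) ^ (-(s/2)) * (b:ℂ) ^ (s/2-1) * Complex.Gamma (s/2) *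
        (1/2 * (((a*b:ℝ):ℂ)/2) ^ (1-s/2)) by
    linear_combination
      (∫ t in Ioi (0:ℝ), ((Real.exp (-t - a^2*b^2/(4*t)) : ℝ):ℂ) * (t:ℂ) ^ (s/2 - 2)) * hconst
  rw [show (2:ℂ) ^ (s/2-1) = Complex.exp ((s/2-1) * ((Real.log 2 : ℝ):ℂ)) by
      rw [show (2:ℂ) = ((2:ℝ):ℂ) by norm_num, cpow_pos_eq 2 two_pos],
    show (((a*b : ℝ):ℂ)/2) ^ (1-s/2) = Complex.exp ((1-s/2) * ((Real.log (a*b/2) : ℝ):ℂ)) by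
      rw [show ((a*b : ℝ):ℂ)/2 = (((a*b/2 : ℝ)):ℂ) by push_cast; ring,
        cpow_pos_eq (a*b/2) (by positivity)],
    cpow_pos_eq a ha, cpow_pos_eq b hb, cpow_pos_eq (4/a^2) (by positivity)]
  have l1 : Real.log (4/a^2) = 2*Real.log 2 - 2*Real.log a := by
    rw [Real.log_div (by norm_num) (by positivity), show (4:ℝ) = 2^2 by norm_num,
      Real.log_pow, Real.log_pow]
    push_cast
    ring
  have l2 : Real.log (a*b/2) = Real.log a + Real.log b - Real.log 2 := by
    rw [Real.log_div (by positivity) (by norm_num), Real.log_mul ha.ne' hb.ne']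
  rw [l1, l2]
  have key : Complex.exp ((s/2)*((2*Real.log 2-2*Real.log a : ℝ):ℂ))
      = Complex.exp ((s/2-1)*((Real.log 2 : ℝ):ℂ)) *
        Complex.exp ((-(s/2))*((Real.log a : ℝ):ℂ)) *
        Complex.exp ((s/2-1)*((Real.log b : ℝ):ℂ)) *
        Complex.exp ((1-s/2)*((Real.log a+Real.log b-Real.log 2 : ℝ):ℂ)) *
        (((4/a : ℝ):ℂ)) := by
    rw [show (((4/a : ℝ)):ℂ) = Complex.exp (((Real.log (4/a) : ℝ):ℂ)) by
        rw [← Complex.ofReal_exp, Real.exp_log (by positivity)],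
      ← Complex.exp_add, ← Complex.exp_add, ← Complex.exp_add, ← Complex.exp_add]
    congr 1
    rw [Real.log_div (by norm_num) ha.ne', show (4:ℝ) = 2^2 by norm_num, Real.log_pow]
    push_cast
    ring
  rw [key]
  push_cast
  field_simp
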